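/- Let k be a field of characteristic p ≥ 5 and a, b ≥ 1 with a + b = p, a > b, and α, β ∈ k[[s]]. Define ℓ^(p) on Λ²(k[[t]]/(t^p))^× by ℓ^(p) = (1/2)∑_{1≤i<p} i · ℓ_{p-i} ∧ ℓ_i, where ℓ_i(u) is the t^i-coefficient of log(u/u(0)). Then ℓ^(p)(ē^{α(0)t^a} ∧ ē^{β(0)t^b}) = b·α(0)·β(0), and this equals res_{s=0}( α b β ds/s ) = res_{s=0} Ω^(p)(s ∧ ē^{αt^a} ∧ ē^{βt^b}). -/

import Mathlib

open Finset PowerSeries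

variable (p : ℕ) {k : Type*} [Field k]

/-- Truncated logarithm `log(1+z) = ∑_{1 ≤ n < p} (-1)^{n+1} z^n / n`. -/
noncomputable def tlog (z : PowerSeries k) : PowerSeries k :=
  ∑ n ∈ Finset.Ico 1 p, ((-1 : k) ^ (n + 1) * (n : k)⁻¹) • z ^ n

/-- `ℓ_i(u)`: the `t^i`-coefficient of `log(u/u(0))`. -/
noncomputable def ell (i : ℕ) (u : PowerSeries k) : k :=
  PowerSeries.coeff (R := k) i
    (tlog p (PowerSeries.C (R := k) (PowerSeries.constantCoeff (R := k) u)⁻¹ * u - 1))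

/-- `ℓ^(p)(u ∧ v) = (1/2)∑_{1≤i<p} i·(ℓ_{p-i}(u)ℓ_i(v) − ℓ_{p-i}(v)ℓ_i(u))`. -/
noncomputable def ellp (u v : PowerSeries k) : k :=
  (2 : k)⁻¹ * ∑ i ∈ Finset.Ico 1 p,
    (i : k) * (ell p (p - i) u * ell p i v - ell p (p - i) v * ell p i u)

/-- Truncated exponential `ē^z = ∑_{0 ≤ n < p} z^n / n!`. -/
noncomputable def ee (z : PowerSeries k) : PowerSeries k :=
  ∑ n ∈ Finset.range p, ((n.factorial : k)⁻¹) • z ^ n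

lemma coeff_ee_aux (hp2 : 2 ≤ p) (c : k) {m i : ℕ} (hi1 : 1 ≤ i) (hi : i < 2 * m) :
    PowerSeries.coeff (R := k) i (ee p (PowerSeries.C (R := k) c * X ^ m)) = if i = m then c else 0 := by
  unfold ee
  rw [map_sum]
  rw [Finset.sum_congr rfl (g := fun n => if n = 1 then (if i = m then c else 0) else 0)
    (fun n _ => ?_), Finset.sum_ite_eq', if_pos (Finset.mem_range.2 (by omega))]
  rw [map_smul, mul_pow, ← map_pow, ← pow_mul, smul_eq_mul, coeff_C_mul, coeff_X_pow]
  match n with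
  | 0 => simp; omega
  | 1 => simp
  | (n + 2) =>
    have : i ≠ m * (n + 2) := by nlinarith
    simp [this]

lemma constantCoeff_ee_aux (hp2 : 2 ≤ p) (c : k) {m : ℕ} (hm : 1 ≤ m) :
    PowerSeries.constantCoeff (R := k) (ee p (PowerSeries.C (R := k) c * X ^ m)) = 1 := by
  unfold ee
  rw [map_sum, Finset.sum_eq_single_of_mem 0 (Finset.mem_range.2 (by omega))
    (fun n _ hn => ?_)]
  · simp
  · rw [mul_pow, ← map_pow, ← pow_mul, ← PowerSeries.coeff_zero_eq_constantCoeff, map_smul,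
      smul_eq_mul, coeff_C_mul, coeff_X_pow]
    have : 0 ≠ m * n := by
      have : 1 ≤ n := Nat.one_le_iff_ne_zero.2 hn
      positivity
    simp [this]

lemma X_pow_dvd_ee_sub_one (hp2 : 2 ≤ p) (c : k) {m : ℕ} (hm : 1 ≤ m) :
    (X : PowerSeries k) ^ m ∣ ee p (PowerSeries.C (R := k) c * X ^ m) - 1 := by
  unfold ee
  rw [Finset.range_eq_Ico, Finset.sum_eq_sum_Ico_succ_bot (by omega)]
  simp only [pow_zero, Nat.factorial_zero, Nat.cast_one, inv_one, one_smul, add_sub_cancel_left]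
  refine Finset.dvd_sum fun n hn => ?_
  have hn1 : 1 ≤ n := (Finset.mem_Ico.1 hn).1
  rw [smul_eq_C_mul, mul_pow]
  exact ((dvd_pow_self ((X : PowerSeries k) ^ m) (show n ≠ 0 by omega)).mul_left _).mul_left _

lemma ell_ee (hp2 : 2 ≤ p) (c : k) {m i : ℕ} (hm : 1 ≤ m) (hi1 : 1 ≤ i) (hi : i < 2 * m) :
    ell p i (ee p (PowerSeries.C (R := k) c * X ^ m)) = if i = m then c else 0 := by
  unfold ell
  rw [constantCoeff_ee_aux p hp2 c hm, inv_one, map_one, one_mul]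
  unfold tlog
  rw [map_sum, Finset.sum_eq_single_of_mem 1 (Finset.mem_Ico.2 ⟨le_refl 1, by omega⟩)
    (fun n hn hn1 => ?_)]
  · rw [map_smul, smul_eq_mul, pow_one, map_sub, coeff_ee_aux p hp2 c hi1 hi]
    rw [PowerSeries.coeff_one, if_neg (show ¬i = 0 by omega)]
    norm_num
  · rw [map_smul, smul_eq_mul]
    have h2n : 2 ≤ n := by simp at hn; omega
    have hdvd : (X : PowerSeries k) ^ (m * n) ∣ (ee p (PowerSeries.C (R := k) c * X ^ m) - 1) ^ n := by
      rw [pow_mul]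
      exact pow_dvd_pow_of_dvd (X_pow_dvd_ee_sub_one p hp2 c hm) n
    have := (PowerSeries.X_pow_dvd_iff.1 hdvd) i (by nlinarith)
    rw [this, mul_zero]

/-- Lemma 6.3 (`lemma-same-unif`): for `a + b = p`, `a > b`,
`ℓ^(p)(ē^{α(0)t^a} ∧ ē^{β(0)t^b}) = b·α(0)·β(0)`, and this coincides with
`res_{s=0}(α·bβ·ds/s) = res_{s=0} Ω^(p)(s ∧ ē^{αt^a} ∧ ē^{βt^b})`, the residue
being the coefficient of `s^{-1}` of the Laurent series `α·(b·β)·s⁻¹`. -/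
theorem ellp_eq_residue_same_unif (hp : p.Prime) (hp5 : 5 ≤ p) [CharP k p]
    (a b : ℕ) (ha : 1 ≤ a) (hb : 1 ≤ b) (hab : a + b = p) (hba : b < a)
    (α β : PowerSeries k) :
    ellp p (ee p (PowerSeries.C (R := k) (PowerSeries.constantCoeff (R := k) α) * X ^ a))
        (ee p (PowerSeries.C (R := k) (PowerSeries.constantCoeff (R := k) β) * X ^ b)) =
      (b : k) * PowerSeries.constantCoeff (R := k) α * PowerSeries.constantCoeff (R := k) β ∧
    ((HahnSeries.ofPowerSeries ℤ k α) * (b : LaurentSeries k) *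
          (HahnSeries.ofPowerSeries ℤ k β) *
          HahnSeries.single (-1 : ℤ) (1 : k)).coeff (-1 : ℤ) =
      (b : k) * PowerSeries.constantCoeff (R := k) α * PowerSeries.constantCoeff (R := k) β := by
  have hp2 : 2 ≤ p := by omega
  set A := PowerSeries.constantCoeff (R := k) α with hA
  set B := PowerSeries.constantCoeff (R := k) β with hB
  have h2a : p < 2 * a := by omega
  constructor
  · -- the `ℓ^(p)` computation
    unfold ellp
    have hu : ∀ i, 1 ≤ i → i < p →
        ell p i (ee p (PowerSeries.C (R := k) A * X ^ a)) = if i = a then A else 0 :=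
      fun i hi1 hi => ell_ee p hp2 A ha hi1 (by omega)
    have hvb : ell p b (ee p (PowerSeries.C (R := k) B * X ^ b)) = B := by
      rw [ell_ee p hp2 B hb hb (by omega), if_pos rfl]
    have hterm : ∀ i ∈ Finset.Ico 1 p,
        (i : k) * (ell p (p - i) (ee p (PowerSeries.C (R := k) A * X ^ a)) *
            ell p i (ee p (PowerSeries.C (R := k) B * X ^ b)) -
          ell p (p - i) (ee p (PowerSeries.C (R := k) B * X ^ b)) *
            ell p i (ee p (PowerSeries.C (R := k) A * X ^ a))) =
        (if i = b then (b : k) * (A * ell p b (ee p (PowerSeries.C (R := k) B * X ^ b))) else 0) -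
        (if i = a then (a : k) * (ell p b (ee p (PowerSeries.C (R := k) B * X ^ b)) * A) else 0) := by
      intro i hi
      simp only [Finset.mem_Ico] at hi
      rw [hu (p - i) (by omega) (by omega), hu i hi.1 hi.2]
      have hiba : p - i = a ↔ i = b := by omega
      by_cases hib : i = b
      · have hia : i ≠ a := by omega
        rw [if_pos (hiba.2 hib), if_neg hia, if_pos hib, if_neg hia, hib]
        ring
      · rw [if_neg (fun h => hib (hiba.1 h)), if_neg hib]
        by_cases hia : i = a
        · rw [if_pos hia, if_pos hia, hia]
          have hpab : p - a = b := by omega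
          rw [hpab]
          ring
        · rw [if_neg hia, if_neg hia]
          ring
    rw [Finset.sum_congr rfl hterm, Finset.sum_sub_distrib, Finset.sum_ite_eq', Finset.sum_ite_eq',
      if_pos (Finset.mem_Ico.2 ⟨hb, by omega⟩), if_pos (Finset.mem_Ico.2 ⟨ha, by omega⟩), hvb]
    have hpk : ((p : ℕ) : k) = 0 := CharP.cast_eq_zero k p
    have hak : (a : k) = -(b : k) := by
      have h : ((a : ℕ) : k) + ((b : ℕ) : k) = ((p : ℕ) : k) := by
        rw [← Nat.cast_add, hab]
      rw [hpk] at h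
      exact eq_neg_of_add_eq_zero_left h
    rw [hak]
    have h2 : (2 : k) ≠ 0 := by
      intro h
      have hdv : (p : ℕ) ∣ 2 := (CharP.cast_eq_zero_iff k p 2).1 (by exact_mod_cast h)
      have := Nat.le_of_dvd (by norm_num) hdv
      omega
    field_simp
    ring
  · -- the residue computation
    have key := HahnSeries.coeff_mul_single_add
      (x := (HahnSeries.ofPowerSeries ℤ k) α * (b : LaurentSeries k) *
        (HahnSeries.ofPowerSeries ℤ k) β) (r := (1 : k)) (a := (0 : ℤ)) (b := (-1 : ℤ))
    rw [zero_add] at key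
    rw [key, mul_one]
    have hb' : (b : LaurentSeries k) = HahnSeries.ofPowerSeries ℤ k (b : PowerSeries k) := by
      rw [map_natCast]
    rw [hb', ← map_mul, ← map_mul]
    have h0 : ((0 : ℤ)) = ((0 : ℕ) : ℤ) := rfl
    rw [h0, HahnSeries.ofPowerSeries_apply_coeff]
    rw [PowerSeries.coeff_zero_eq_constantCoeff, map_mul, map_mul, ← hA, ← hB]
    have : PowerSeries.constantCoeff (R := k) ((b : ℕ) : PowerSeries k) = ((b : ℕ) : k) := by
      rw [map_natCast]
    rw [this]
    ring
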